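/- For a subset B of {0,1,…,f−1}, one has n'_B ≡ 0 (mod ℓ^f + 1) if and only if f is odd and B is either the set of even indices {0,2,…,f−1} or the set of odd indices {1,3,…,f−2}. -/

import Mathlib

namespace Stmt3

/-- `n_B = ∑_{i∈B} ℓ^{i+1} − ∑_{i∉B} ℓ^i`. -/
def nB (ℓ f : ℕ) (B : Finset (Fin f)) : ℤ :=
  ∑ i ∈ B, (ℓ : ℤ) ^ ((i : ℕ) + 1) - ∑ i ∈ Bᶜ, (ℓ : ℤ) ^ (i : ℕ)

/-- `n'_B = n_B + 1`. -/
def nB' (ℓ f : ℕ) (B : Finset (Fin f)) : ℤ := nB ℓ f B + 1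

/-- The set of even indices in `{0,…,f−1}`. -/
def evens (f : ℕ) : Finset (Fin f) := Finset.univ.filter fun i => Even (i : ℕ)

/-- The set of odd indices in `{0,…,f−1}`. -/
def odds (f : ℕ) : Finset (Fin f) := Finset.univ.filter fun i => ¬ Even (i : ℕ)

/-- The "digit sum" of `B`. -/
def S (ℓ f : ℕ) (B : Finset (Fin f)) : ℕ := ∑ i ∈ B, ℓ ^ (i : ℕ)

def T (ℓ f : ℕ) : ℕ := ∑ i ∈ Finset.range f, ℓ ^ i

def Ev (ℓ f : ℕ) : ℕ := ∑ i ∈ Finset.range f, if Even i then ℓ ^ i else 0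

def Od (ℓ f : ℕ) : ℕ := ∑ i ∈ Finset.range f, if Even i then 0 else ℓ ^ i

lemma EO (ℓ k : ℕ) : Ev ℓ (2 * k + 1) = ℓ * Od ℓ (2 * k + 1) + 1 ∧
    ℓ * Ev ℓ (2 * k + 1) = Od ℓ (2 * k + 1) + ℓ ^ (2 * k + 1) := by
  induction k with
  | zero => simp [Ev, Od]
  | succ k ih =>
    obtain ⟨ih1, ih2⟩ := ih
    have he : ¬ Even (2 * k + 1) := by simp [Nat.even_add_one]
    have ho : Even (2 * k + 1 + 1) := by simp [Nat.even_add_one]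
    have h1 : 2 * (k + 1) + 1 = 2 * k + 1 + 1 + 1 := by ring
    rw [h1]
    simp only [Ev, Od] at ih1 ih2 ⊢
    rw [Finset.sum_range_succ (fun i => if Even i then ℓ ^ i else 0) (2 * k + 1 + 1),
      Finset.sum_range_succ (fun i => if Even i then ℓ ^ i else 0) (2 * k + 1),
      Finset.sum_range_succ (fun i => if Even i then (0:ℕ) else ℓ ^ i) (2 * k + 1 + 1),
      Finset.sum_range_succ (fun i => if Even i then (0:ℕ) else ℓ ^ i) (2 * k + 1)]
    simp only [if_neg he, if_pos ho, add_zero]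
    constructor
    · rw [ih1]; ring
    · rw [mul_add, ih2]; ring

lemma S_evens (ℓ f : ℕ) : S ℓ f (evens f) = Ev ℓ f := by
  rw [S, evens, Finset.sum_filter, Ev,
    ← Fin.sum_univ_eq_sum_range (fun i => if Even i then ℓ ^ i else 0) f]

lemma S_odds (ℓ f : ℕ) : S ℓ f (odds f) = Od ℓ f := by
  rw [S, odds, Finset.sum_filter, Od,
    ← Fin.sum_univ_eq_sum_range (fun i => if Even i then 0 else ℓ ^ i) f]
  apply Finset.sum_congr rfl
  intro i _
  by_cases h : Even (i : ℕ) <;> simp [h]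

lemma EOT (ℓ f : ℕ) : Ev ℓ f + Od ℓ f = T ℓ f := by
  rw [Ev, Od, T, ← Finset.sum_add_distrib]
  apply Finset.sum_congr rfl
  intro i _
  by_cases h : Even i <;> simp [h]

lemma S_le (ℓ f : ℕ) (B : Finset (Fin f)) : S ℓ f B ≤ T ℓ f := by
  calc S ℓ f B ≤ ∑ i : Fin f, ℓ ^ (i : ℕ) :=
        Finset.sum_le_sum_of_subset (Finset.subset_univ B)
    _ = T ℓ f := Fin.sum_univ_eq_sum_range (fun i => ℓ ^ i) f

lemma S_inj (ℓ f : ℕ) (hℓ2 : 2 ≤ ℓ) {B C : Finset (Fin f)} (h : S ℓ f B = S ℓ f C) :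
    B = C := by
  apply Finset.map_injective Fin.valEmbedding
  apply Finset.geomSum_injective hℓ2
  simpa [Finset.sum_map, S] using h

lemma nB'_eq (ℓ f : ℕ) (B : Finset (Fin f)) :
    nB' ℓ f B = (ℓ + 1) * (S ℓ f B : ℤ) - (T ℓ f : ℤ) + 1 := by
  rw [nB', nB]
  have h1 : ∑ i ∈ B, (ℓ : ℤ) ^ ((i : ℕ) + 1) = ℓ * ∑ i ∈ B, (ℓ : ℤ) ^ (i : ℕ) := by
    rw [Finset.mul_sum]
    exact Finset.sum_congr rfl fun i _ => by ring
  have h2 : ∑ i ∈ Bᶜ, (ℓ : ℤ) ^ (i : ℕ) =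
      (∑ i : Fin f, (ℓ : ℤ) ^ (i : ℕ)) - ∑ i ∈ B, (ℓ : ℤ) ^ (i : ℕ) := by
    rw [eq_sub_iff_add_eq, Finset.sum_compl_add_sum]
  have h3 : (∑ i : Fin f, (ℓ : ℤ) ^ (i : ℕ)) = (T ℓ f : ℤ) := by
    rw [Fin.sum_univ_eq_sum_range (fun i => (ℓ : ℤ) ^ i) f, T]
    push_cast
    rfl
  have h4 : (S ℓ f B : ℤ) = ∑ i ∈ B, (ℓ : ℤ) ^ (i : ℕ) := by
    rw [S]; push_cast; rfl
  rw [h1, h2, h3, h4]; ring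

lemma T_cast (ℓ f : ℕ) : ((T ℓ f : ℕ) : ZMod (ℓ + 1)) = if Even f then 0 else 1 := by
  have hneg : ((ℓ : ZMod (ℓ + 1))) = -1 := by
    have h := ZMod.natCast_self (ℓ + 1)
    push_cast at h
    linear_combination h
  rw [T]
  push_cast [hneg]
  exact neg_one_geom_sum

theorem stmt3 (ℓ f : ℕ) (hℓ : ℓ.Prime) (hf : 0 < f) (B : Finset (Fin f)) :
    Int.ModEq ((ℓ : ℤ) ^ f + 1) (nB' ℓ f B) 0 ↔
      Odd f ∧ (B = evens f ∨ B = odds f) := by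
  have hℓ2 : 2 ≤ ℓ := hℓ.two_le
  have hℓ2' : (2 : ℤ) ≤ (ℓ : ℤ) := by exact_mod_cast hℓ2
  haveI : Fact (1 < ℓ + 1) := ⟨by omega⟩
  set d : ℤ := (ℓ : ℤ) ^ f + 1 with hd
  have hd0 : (0 : ℤ) < d := by positivity
  have hzero : ((ℓ : ZMod (ℓ + 1)) + 1) = 0 := by
    have h := ZMod.natCast_self (ℓ + 1)
    push_cast at h
    linear_combination h
  -- key identities for odd f
  have key : Odd f → ((ℓ : ℤ) + 1) * (S ℓ f (odds f) : ℤ) = (T ℓ f : ℤ) - 1 ∧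
      ((ℓ : ℤ) + 1) * (S ℓ f (evens f) : ℤ) = (T ℓ f : ℤ) + (ℓ : ℤ) ^ f := by
    rintro ⟨k, hk⟩
    obtain ⟨he, ho⟩ := EO ℓ k
    rw [← show f = 2 * k + 1 from by omega] at he ho
    have ht := EOT ℓ f
    rw [S_evens, S_odds]
    constructor
    · have hn : (ℓ + 1) * Od ℓ f + 1 = T ℓ f := by
        rw [add_mul, one_mul]; linarith
      have := congrArg (fun n : ℕ => (n : ℤ)) hn
      push_cast at this
      linarith
    · have hn : (ℓ + 1) * Ev ℓ f = T ℓ f + ℓ ^ f := by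
        rw [add_mul, one_mul]; linarith
      have := congrArg (fun n : ℕ => (n : ℤ)) hn
      push_cast at this
      linarith
  have heq := nB'_eq ℓ f B
  have hTZ : (T ℓ f : ℤ) * ((ℓ : ℤ) - 1) = (ℓ : ℤ) ^ f - 1 := by
    rw [T]; push_cast; exact geom_sum_mul _ _
  have hS_le : (S ℓ f B : ℤ) ≤ (T ℓ f : ℤ) := by exact_mod_cast S_le ℓ f B
  have hS0 : (0 : ℤ) ≤ (S ℓ f B : ℤ) := by positivity
  have hT0 : (0 : ℤ) ≤ (T ℓ f : ℤ) := by positivity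
  constructor
  · intro h
    obtain ⟨c, hc⟩ : d ∣ nB' ℓ f B := Int.modEq_zero_iff_dvd.mp h
    have hub : nB' ℓ f B < 2 * d := by
      rw [heq, hd]
      nlinarith [mul_le_mul_of_nonneg_left hS_le (by positivity : (0:ℤ) ≤ (ℓ:ℤ) + 1),
        mul_nonneg (by linarith : (0:ℤ) ≤ (ℓ:ℤ) - 2) hT0]
    have hlb : -d < nB' ℓ f B := by
      rw [heq, hd]
      nlinarith [mul_nonneg (by positivity : (0:ℤ) ≤ (ℓ:ℤ) + 1) hS0,
        mul_nonneg (by linarith : (0:ℤ) ≤ (ℓ:ℤ) - 2) hT0]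
    have hc01 : c = 0 ∨ c = 1 := by
      have h1 : -1 < c := by
        have : d * (-1) < d * c := by rw [← hc]; linarith
        exact lt_of_mul_lt_mul_left this (le_of_lt hd0)
      have h2 : c < 2 := by
        have : d * c < d * 2 := by rw [← hc]; linarith
        exact lt_of_mul_lt_mul_left this (le_of_lt hd0)
      omega
    rcases hc01 with rfl | rfl
    · -- nB' = 0, B should be odds
      rw [mul_zero] at hc
      have E0 : ((ℓ : ℤ) + 1) * (S ℓ f B : ℤ) = (T ℓ f : ℤ) - 1 := by
        rw [heq] at hc; linarith
      have hodd : Odd f := by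
        rw [← Nat.not_even_iff_odd]
        intro hev
        have hz := congrArg (fun z : ℤ => (z : ZMod (ℓ + 1))) E0
        push_cast at hz
        rw [hzero, zero_mul, T_cast, if_pos hev] at hz
        exact one_ne_zero (α := ZMod (ℓ + 1)) (by linear_combination hz)
      obtain ⟨k1, _⟩ := key hodd
      have hS : (S ℓ f B : ℤ) = (S ℓ f (odds f) : ℤ) :=
        mul_left_cancel₀ (by positivity : ((ℓ : ℤ) + 1) ≠ 0) (by linarith)
      exact ⟨hodd, Or.inr (S_inj ℓ f hℓ2 (by exact_mod_cast hS))⟩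
    · -- nB' = d, B should be evens
      rw [mul_one] at hc
      have E1 : ((ℓ : ℤ) + 1) * (S ℓ f B : ℤ) = (T ℓ f : ℤ) + (ℓ : ℤ) ^ f := by
        rw [heq] at hc; rw [hd] at hc; linarith
      have hodd : Odd f := by
        rw [← Nat.not_even_iff_odd]
        intro hev
        have hz := congrArg (fun z : ℤ => (z : ZMod (ℓ + 1))) E1
        push_cast at hz
        have hneg : (ℓ : ZMod (ℓ + 1)) = -1 := by linear_combination hzero
        rw [hzero, zero_mul, T_cast, if_pos hev, hneg, hev.neg_one_pow] at hz
        exact one_ne_zero (α := ZMod (ℓ + 1)) (by linear_combination -hz)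
      obtain ⟨_, k2⟩ := key hodd
      have hS : (S ℓ f B : ℤ) = (S ℓ f (evens f) : ℤ) :=
        mul_left_cancel₀ (by positivity : ((ℓ : ℤ) + 1) ≠ 0) (by linarith)
      exact ⟨hodd, Or.inl (S_inj ℓ f hℓ2 (by exact_mod_cast hS))⟩
  · rintro ⟨hodd, hB⟩
    obtain ⟨k1, k2⟩ := key hodd
    rcases hB with rfl | rfl
    · have : nB' ℓ f (evens f) = d := by rw [nB'_eq, k2, hd]; ring
      rw [this]
      exact Int.modEq_zero_iff_dvd.mpr dvd_rfl
    · have : nB' ℓ f (odds f) = 0 := by rw [nB'_eq, k1]; ring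
      rw [this]

end Stmt3
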